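/- Let X be a real symmetric n×n matrix with eigenvalue decomposition X = Σ_{i=1}^n λᵢ·vᵢvᵢᵀ, where λ₁, …, λₙ are the eigenvalues of X and v₁, …, vₙ is a corresponding orthonormal basis of eigenvectors. Define X₊ = Σ_{i=1}^n max{λᵢ, 0}·vᵢvᵢᵀ. Then X₊ is symmetric positive semidefinite, and for every symmetric positive semidefinite n×n real matrix Y one has ‖X − X₊‖_F ≤ ‖X − Y‖_F, with equality only if Y = X₊; that is, X₊ is the unique Frobenius-norm projection of X onto the cone of symmetric positive semidefinite matrices. -/

import Mathlib

open Matrix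

/-- The Frobenius norm `‖M‖_F = √(Tr(MᵀM))` of a real matrix. -/
noncomputable def frobNorm {a b : ℕ} (M : Matrix (Fin a) (Fin b) ℝ) : ℝ :=
  Real.sqrt (Matrix.trace (Mᵀ * M))

lemma trace_eq_tsq {n : ℕ} (M : Matrix (Fin n) (Fin n) ℝ) :
    Matrix.trace (Mᵀ * M) = ∑ p : Fin n × Fin n, (M p.1 p.2)^2 := by
  rw [Matrix.trace, Fintype.sum_prod_type]
  simp only [Matrix.diag_apply, Matrix.mul_apply, Matrix.transpose_apply]
  rw [Finset.sum_comm]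
  simp [sq]

lemma frobNorm_eq_sqrt_tsq {n : ℕ} (M : Matrix (Fin n) (Fin n) ℝ) :
    frobNorm M = Real.sqrt (∑ p : Fin n × Fin n, (M p.1 p.2)^2) := by
  rw [frobNorm, trace_eq_tsq]

lemma frob_conj {n : ℕ} (P M : Matrix (Fin n) (Fin n) ℝ)
    (h1 : P * Pᵀ = 1) (h2 : Pᵀ * P = 1) :
    frobNorm (Pᵀ * M * P) = frobNorm M := by
  unfold frobNorm
  congr 1
  have hcancel : ∀ (A : Matrix (Fin n) (Fin n) ℝ), P * (Pᵀ * A) = A := fun A => by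
    rw [← Matrix.mul_assoc, h1, Matrix.one_mul]
  have : (Pᵀ * M * P)ᵀ * (Pᵀ * M * P) = Pᵀ * (Mᵀ * M) * P := by
    simp only [Matrix.transpose_mul, Matrix.transpose_transpose, Matrix.mul_assoc, hcancel]
  rw [this, Matrix.trace_mul_cycle, ← Matrix.mul_assoc, h1, Matrix.one_mul]

lemma diag_pointwise_le {n : ℕ} (lam : Fin n → ℝ) (Z : Matrix (Fin n) (Fin n) ℝ)
    (hZ : ∀ i, 0 ≤ Z i i) (i j : Fin n) :
    ((diagonal lam - diagonal (fun i => max (lam i) 0)) i j)^2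
      ≤ ((diagonal lam - Z) i j)^2 := by
  rcases eq_or_ne i j with rfl | h
  · simp only [Matrix.sub_apply, Matrix.diagonal_apply_eq]
    rcases le_or_gt 0 (lam i) with hl | hl
    · rw [max_eq_left hl]; nlinarith [sq_nonneg (lam i - Z i i)]
    · rw [max_eq_right hl.le]; nlinarith [hZ i]
  · simp only [Matrix.sub_apply, Matrix.diagonal_apply_ne _ h]
    nlinarith [sq_nonneg (Z i j)]

lemma diag_pointwise_eq {n : ℕ} (lam : Fin n → ℝ) (Z : Matrix (Fin n) (Fin n) ℝ)
    (hZ : ∀ i, 0 ≤ Z i i) (i j : Fin n)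
    (heq : ((diagonal lam - diagonal (fun i => max (lam i) 0)) i j)^2
      = ((diagonal lam - Z) i j)^2) :
    Z i j = diagonal (fun i => max (lam i) 0) i j := by
  rcases eq_or_ne i j with rfl | h
  · simp only [Matrix.sub_apply, Matrix.diagonal_apply_eq] at heq ⊢
    rcases le_or_gt 0 (lam i) with hl | hl
    · rw [max_eq_left hl] at heq ⊢
      have : (lam i - Z i i)^2 = 0 := by linarith [heq, sq_nonneg (lam i - lam i)]
      have := pow_eq_zero_iff (n := 2) (by norm_num) |>.mp this
      linarith
    · rw [max_eq_right hl.le] at heq ⊢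
      have h0 : Z i i * (Z i i - 2 * lam i) = 0 := by nlinarith [heq]
      rcases mul_eq_zero.mp h0 with h' | h'
      · exact h'
      · nlinarith [hZ i]
  · simp only [Matrix.sub_apply, Matrix.diagonal_apply_ne _ h] at heq ⊢
    have : Z i j ^ 2 = 0 := by nlinarith [heq]
    have := pow_eq_zero_iff (n := 2) (by norm_num) |>.mp this
    linarith

theorem stmt_16 (n : ℕ) (X : Matrix (Fin n) (Fin n) ℝ) (hX : X.IsSymm)
    (lam : Fin n → ℝ) (v : Fin n → (Fin n → ℝ))
    (hortho : ∀ i j, v i ⬝ᵥ v j = if i = j then (1 : ℝ) else 0)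
    (heig : ∀ i, X.mulVec (v i) = lam i • v i)
    (hdecomp : X = ∑ i, lam i • Matrix.vecMulVec (v i) (v i))
    (Xp : Matrix (Fin n) (Fin n) ℝ)
    (hXp : Xp = ∑ i, max (lam i) 0 • Matrix.vecMulVec (v i) (v i)) :
    Xp.IsSymm ∧ Xp.PosSemidef ∧
      ∀ Y : Matrix (Fin n) (Fin n) ℝ, Y.IsSymm → Y.PosSemidef →
        frobNorm (X - Xp) ≤ frobNorm (X - Y) ∧
        (frobNorm (X - Xp) = frobNorm (X - Y) → Y = Xp) := by
  set P : Matrix (Fin n) (Fin n) ℝ := Matrix.of v with hP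
  have hPPt : P * Pᵀ = 1 := by
    ext i j
    have := hortho i j
    simpa [Matrix.mul_apply, Matrix.one_apply, dotProduct, hP] using this
  have hPtP : Pᵀ * P = 1 := mul_eq_one_comm.mp hPPt
  have key : ∀ (c : Fin n → ℝ),
      (∑ k, c k • Matrix.vecMulVec (v k) (v k)) = Pᵀ * diagonal c * P := by
    intro c
    ext i j
    rw [Matrix.mul_assoc]
    simp [Matrix.sum_apply, Matrix.mul_apply, Matrix.diagonal_apply, Matrix.vecMulVec_apply,
      ite_mul, zero_mul, Finset.sum_ite_eq, hP]
    exact Finset.sum_congr rfl (fun k _ => by ring)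
  have hXD : X = Pᵀ * diagonal lam * P := by rw [hdecomp, key]
  have hXpD : Xp = Pᵀ * diagonal (fun i => max (lam i) 0) * P := by rw [hXp, key]
  have hDp : (diagonal (fun i => max (lam i) 0)).PosSemidef := by
    rw [Matrix.posSemidef_diagonal_iff]
    intro i; exact le_max_right _ _
  have hXpPSD : Xp.PosSemidef := by
    rw [hXpD]
    have := hDp.mul_mul_conjTranspose_same Pᵀ
    simpa using this
  have hXpSymm : Xp.IsSymm := by
    have := hXpPSD.isHermitian
    simpa [Matrix.IsHermitian, Matrix.IsSymm] using this
  refine ⟨hXpSymm, hXpPSD, ?_⟩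
  intro Y hYsymm hYpsd
  set Z : Matrix (Fin n) (Fin n) ℝ := P * Y * Pᵀ with hZdef
  have hZpsd : Z.PosSemidef := by
    have := hYpsd.mul_mul_conjTranspose_same P
    simpa [hZdef] using this
  have hZdiag : ∀ i, 0 ≤ Z i i := by
    intro i
    exact hZpsd.diag_nonneg
  have hYrec : Y = Pᵀ * Z * P := by
    rw [hZdef]
    calc Y = (Pᵀ * P) * Y * (Pᵀ * P) := by rw [hPtP]; simp
      _ = Pᵀ * (P * Y * Pᵀ) * P := by simp only [Matrix.mul_assoc]
  have hXmXp : X - Xp = Pᵀ * (diagonal lam - diagonal (fun i => max (lam i) 0)) * P := by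
    rw [hXD, hXpD, Matrix.mul_sub, Matrix.sub_mul]
  have hXmY : X - Y = Pᵀ * (diagonal lam - Z) * P := by
    rw [hXD, hYrec, Matrix.mul_sub, Matrix.sub_mul]
  rw [hXmXp, hXmY, frob_conj _ _ hPPt hPtP, frob_conj _ _ hPPt hPtP,
    frobNorm_eq_sqrt_tsq, frobNorm_eq_sqrt_tsq]
  have hptwise : ∀ p ∈ Finset.univ (α := Fin n × Fin n),
      ((diagonal lam - diagonal (fun i => max (lam i) 0)) p.1 p.2)^2
        ≤ ((diagonal lam - Z) p.1 p.2)^2 :=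
    fun p _ => diag_pointwise_le lam Z hZdiag p.1 p.2
  have hsum : (∑ p : Fin n × Fin n,
        ((diagonal lam - diagonal (fun i => max (lam i) 0)) p.1 p.2)^2)
      ≤ ∑ p : Fin n × Fin n, ((diagonal lam - Z) p.1 p.2)^2 :=
    Finset.sum_le_sum hptwise
  constructor
  · exact Real.sqrt_le_sqrt hsum
  · intro heq
    have h1 : (0:ℝ) ≤ ∑ p : Fin n × Fin n,
        ((diagonal lam - diagonal (fun i => max (lam i) 0)) p.1 p.2)^2 := by positivity
    have h2 : (0:ℝ) ≤ ∑ p : Fin n × Fin n, ((diagonal lam - Z) p.1 p.2)^2 := by positivity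
    have hsumeq : (∑ p : Fin n × Fin n,
          ((diagonal lam - diagonal (fun i => max (lam i) 0)) p.1 p.2)^2)
        = ∑ p : Fin n × Fin n, ((diagonal lam - Z) p.1 p.2)^2 :=
      (Real.sqrt_inj h1 h2).mp heq
    have hpt := (Finset.sum_eq_sum_iff_of_le hptwise).mp hsumeq
    have hZeq : Z = diagonal (fun i => max (lam i) 0) := by
      ext i j
      exact diag_pointwise_eq lam Z hZdiag i j (hpt (i, j) (Finset.mem_univ _))
    rw [hYrec, hZeq, ← hXpD]
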